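/- arXiv:2305.09427 — 4 statements merged into one kernel-verified Lean document; each statement's English description precedes it below -/
import Mathlib

section
/- For every positive real u within the radius of convergence of Φ, one has u ≤ ρ·Φ(u), with equality if and only if u = τ. (The line u ↦ u/ρ is tangent to the convex function Φ at τ.) -/
/-- For every positive u within the radius of convergence, u ≤ ρ·Φ(u),
with equality iff u = τ, where ρ = τ/Φ(τ). -/
theorem stmt_2 (w : ℕ → ℝ) (hw : ∀ j, 0 ≤ w j) (hw0 : w 0 = 1)
    (hj : ∃ j, 2 ≤ j ∧ 0 < w j)
    (τ : ℝ) (hτ : 0 < τ)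
    (Φ : ℝ → ℝ) (hΦ : ∀ t, 0 ≤ t → Summable (fun j => w j * t ^ j) → Φ t = ∑' j, w j * t ^ j)
    (hτsum : Summable fun j => w j * τ ^ j)
    (D : ℝ) (hD : HasDerivAt Φ D τ)
    (hfix : Φ τ = τ * D) :
    ∀ u : ℝ, 0 < u → Summable (fun j => w j * u ^ j) →
      u ≤ (τ / Φ τ) * Φ u ∧ (u = (τ / Φ τ) * Φ u ↔ u = τ) := by
  intro u hu husum
  obtain ⟨j₀, hj₀2, hj₀pos⟩ := hj
  set M : ℝ := max u τ with hM
  have hMsum : Summable (fun j => w j * M ^ j) := by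
    rcases max_cases u τ with ⟨h, _⟩ | ⟨h, _⟩ <;> rw [hM, h] <;> assumption
  -- summability on [0, M]
  have hsum : ∀ t ∈ Set.Icc (0 : ℝ) M, Summable (fun i => w i * t ^ i) := by
    intro t ht
    refine Summable.of_nonneg_of_le (fun i => mul_nonneg (hw i) (pow_nonneg ht.1 i))
      (fun i => ?_) hMsum
    exact mul_le_mul_of_nonneg_left (pow_le_pow_left₀ ht.1 ht.2 i) (hw i)
  have hΦeq : ∀ t ∈ Set.Icc (0 : ℝ) M, Φ t = ∑' i, w i * t ^ i := fun t ht =>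
    hΦ t ht.1 (hsum t ht)
  have huM : u ∈ Set.Icc (0 : ℝ) M := ⟨hu.le, le_max_left _ _⟩
  have hτM : τ ∈ Set.Icc (0 : ℝ) M := ⟨hτ.le, le_max_right _ _⟩
  -- split off the j₀ term
  set v : ℕ → ℝ := Function.update w j₀ 0 with hv
  have hvle : ∀ i, 0 ≤ v i ∧ v i ≤ w i := by
    intro i
    by_cases h : i = j₀ <;> simp [hv, Function.update_apply, h, hw i, (hw j₀)]
  have hsumv : ∀ t ∈ Set.Icc (0 : ℝ) M, Summable (fun i => v i * t ^ i) := by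
    intro t ht
    refine Summable.of_nonneg_of_le
      (fun i => mul_nonneg (hvle i).1 (pow_nonneg ht.1 i)) (fun i => ?_) (hsum t ht)
    exact mul_le_mul_of_nonneg_right (hvle i).2 (pow_nonneg ht.1 i)
  have hsplit : ∀ t ∈ Set.Icc (0 : ℝ) M,
      (∑' i, w i * t ^ i) = (∑' i, v i * t ^ i) + w j₀ * t ^ j₀ := by
    intro t ht
    have h1 : (∑' i, w i * t ^ i)
        = w j₀ * t ^ j₀ + ∑' i, ite (i = j₀) 0 (w i * t ^ i) :=
      Summable.tsum_eq_add_tsum_ite (hsum t ht) j₀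
    have h2 : (∑' i, v i * t ^ i) = ∑' i, ite (i = j₀) 0 (w i * t ^ i) := by
      refine tsum_congr fun i => ?_
      by_cases h : i = j₀ <;> simp [hv, Function.update_apply, h]
    rw [h1, h2]; ring
  -- convexity of the v-part
  have hg : ConvexOn ℝ (Set.Icc (0 : ℝ) M) (fun t => ∑' i, v i * t ^ i) := by
    refine ⟨convex_Icc _ _, fun x hx y hy a b ha hb hab => ?_⟩
    have hmem : a • x + b • y ∈ Set.Icc (0 : ℝ) M := (convex_Icc _ _) hx hy ha hb hab
    have hterm : ∀ i, v i * (a • x + b • y) ^ i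
        ≤ a * (v i * x ^ i) + b * (v i * y ^ i) := by
      intro i
      have := (convexOn_pow (𝕜 := ℝ) i).2 hx.1 hy.1 ha hb hab
      simp only [smul_eq_mul] at this ⊢
      calc v i * (a * x + b * y) ^ i ≤ v i * (a * x ^ i + b * y ^ i) :=
            mul_le_mul_of_nonneg_left this (hvle i).1
        _ = a * (v i * x ^ i) + b * (v i * y ^ i) := by ring
    have hRsum : Summable (fun i => a * (v i * x ^ i) + b * (v i * y ^ i)) :=
      ((hsumv x hx).mul_left a).add ((hsumv y hy).mul_left b)
    have hLsum : Summable (fun i => v i * (a • x + b • y) ^ i) := hsumv _ hmem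
    calc (∑' i, v i * (a • x + b • y) ^ i)
        ≤ ∑' i, (a * (v i * x ^ i) + b * (v i * y ^ i)) :=
          Summable.tsum_le_tsum hterm hLsum hRsum
      _ = a * (∑' i, v i * x ^ i) + b * (∑' i, v i * y ^ i) := by
          rw [Summable.tsum_add ((hsumv x hx).mul_left a) ((hsumv y hy).mul_left b),
            tsum_mul_left, tsum_mul_left]
      _ = a • (∑' i, v i * x ^ i) + b • (∑' i, v i * y ^ i) := by
          simp [smul_eq_mul]
  -- strict convexity of the j₀-part
  have hh : StrictConvexOn ℝ (Set.Icc (0 : ℝ) M) (fun t => w j₀ * t ^ j₀) := by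
    have hp : StrictConvexOn ℝ (Set.Icc (0 : ℝ) M) (fun t : ℝ => t ^ j₀) :=
      (strictConvexOn_pow hj₀2).subset (fun x hx => hx.1) (convex_Icc _ _)
    refine ⟨convex_Icc _ _, fun x hx y hy hne a b ha hb hab => ?_⟩
    have := hp.2 hx hy hne ha hb hab
    simp only [smul_eq_mul] at this ⊢
    nlinarith [hj₀pos]
  have hf : StrictConvexOn ℝ (Set.Icc (0 : ℝ) M) (fun t => ∑' i, w i * t ^ i) := by
    have := hg.add_strictConvexOn hh
    refine ⟨convex_Icc _ _, fun x hx y hy hne a b ha hb hab => ?_⟩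
    have hmem : a • x + b • y ∈ Set.Icc (0 : ℝ) M := (convex_Icc _ _) hx hy ha.le hb.le hab
    dsimp only
    rw [hsplit _ hmem, hsplit _ hx, hsplit _ hy]
    have h2 := this.2 hx hy hne ha hb hab
    simpa using h2
  -- strict convexity of Φ on [0, M]
  have hΦconv : StrictConvexOn ℝ (Set.Icc (0 : ℝ) M) Φ := by
    refine ⟨convex_Icc _ _, fun x hx y hy hne a b ha hb hab => ?_⟩
    have hmem : a • x + b • y ∈ Set.Icc (0 : ℝ) M := (convex_Icc _ _) hx hy ha.le hb.le hab
    rw [hΦeq _ hmem, hΦeq _ hx, hΦeq _ hy]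
    exact hf.2 hx hy hne ha hb hab
  -- Φ τ ≥ 1 > 0
  have hΦτ : (1 : ℝ) ≤ Φ τ := by
    rw [hΦeq τ hτM]
    have h0 : w 0 * τ ^ 0 = 1 := by simp [hw0]
    calc (1 : ℝ) = w 0 * τ ^ 0 := h0.symm
      _ ≤ ∑' i, w i * τ ^ i :=
        Summable.le_tsum hτsum 0 fun i _ => mul_nonneg (hw i) (pow_nonneg hτ.le i)
  have hΦτpos : 0 < Φ τ := lt_of_lt_of_le one_pos hΦτ
  have hDpos : 0 < D := by
    have h1 : 0 < τ * D := hfix ▸ hΦτpos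
    nlinarith
  -- key strict inequality: u ≠ τ → u * D < Φ u
  have key : u ≠ τ → u * D < Φ u := by
    intro hne
    rcases lt_or_gt_of_ne hne with h | h
    · -- u < τ : slope Φ u τ < D
      have := hΦconv.slope_lt_of_hasDerivAt huM hτM h hD
      rw [slope_def_field] at this
      have hdiv : (Φ τ - Φ u) / (τ - u) < D := this
      have hτu : 0 < τ - u := by linarith
      have := (div_lt_iff₀ hτu).mp hdiv
      -- Φ τ - Φ u < D * (τ - u), Φ τ = τ * D
      nlinarith [hfix]
    · -- τ < u : D < slope Φ τ u
      have := hΦconv.lt_slope_of_hasDerivAt hτM huM h hD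
      rw [slope_def_field] at this
      have huτ : 0 < u - τ := by linarith
      have := (lt_div_iff₀ huτ).mp this
      nlinarith [hfix]
  have hρ : τ / Φ τ = 1 / D := by
    rw [hfix]; field_simp
  constructor
  · -- u ≤ (τ/Φτ) Φ u
    rcases eq_or_ne u τ with rfl | hne
    · rw [hρ, hfix]; field_simp; exact le_rfl
    · have := key hne
      rw [hρ]
      rw [one_div, inv_mul_eq_div, le_div_iff₀ hDpos]
      linarith
  · constructor
    · intro heq
      by_contra hne
      have hlt := key hne
      rw [hρ, one_div, inv_mul_eq_div, eq_div_iff hDpos.ne'] at heq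
      linarith
    · rintro rfl
      rw [hρ, hfix, one_div, inv_mul_eq_div, eq_div_iff hDpos.ne']
end

section
/- Let (η_k)_{k≥0} be positive reals satisfying η_k = (η_{k−1}/λ)^r · λ · e^{θ_{k−1}} for k ≥ 1, with integer r ≥ 2, λ > 0, and |θ_j| ≤ C·B^{r^j} for constants C > 0 and B ∈ (0,1). Then there is a positive real μ such that log(η_k/λ) = r^k·log μ − ∑_{j≥k} r^{k−1−j} θ_j; consequently η_k = λ·μ^{r^k}·(1 + O(B^{r^k})). -/
lemma abs_exp_sub_one_le' (x : ℝ) : |Real.exp x - 1| ≤ |x| * Real.exp |x| := by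
  rcases le_total 0 x with hx | hx
  · rw [abs_of_nonneg hx, abs_of_nonneg (by linarith [Real.one_le_exp hx] : (0:ℝ) ≤ Real.exp x - 1)]
    have h := Real.add_one_le_exp (-x)
    have h2 : (-x + 1) * Real.exp x ≤ 1 := by
      have := mul_le_mul_of_nonneg_right h (Real.exp_pos x).le
      rwa [← Real.exp_add, neg_add_cancel, Real.exp_zero] at this
    nlinarith [Real.exp_pos x]
  · rw [abs_of_nonpos hx, abs_of_nonpos (by linarith [Real.exp_le_one_iff.mpr hx] : Real.exp x - 1 ≤ 0)]
    have h := Real.add_one_le_exp x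
    have h1 : (1:ℝ) ≤ Real.exp (-x) := Real.one_le_exp (by linarith)
    nlinarith

/-- If η_k/λ = (η_{k−1}/λ)^r · e^{θ_{k−1}} with |θ_j| ≤ C·B^{r^j}, then there is
μ > 0 with log(η_k/λ) = r^k·log μ − ∑_{j≥k} r^{k−1−j} θ_j, and consequently
η_k = λ·μ^{r^k}·(1 + O(B^{r^k})). -/
theorem stmt_8 (r : ℕ) (hr : 2 ≤ r) (l B C : ℝ) (hl : 0 < l)
    (hB0 : 0 < B) (hB1 : B < 1) (hC : 0 < C)
    (η : ℕ → ℝ) (hpos : ∀ k, 0 < η k)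
    (θ : ℕ → ℝ) (hθ : ∀ j, |θ j| ≤ C * B ^ (r ^ j))
    (hrec : ∀ k, η (k + 1) / l = (η k / l) ^ r * Real.exp (θ k)) :
    ∃ μ : ℝ, 0 < μ ∧
      (∀ k, Real.log (η k / l)
          = (r : ℝ) ^ k * Real.log μ - ∑' j : ℕ, ((r : ℝ) ^ (j + 1))⁻¹ * θ (j + k)) ∧
      ∃ C' : ℝ, ∀ k, |η k / (l * μ ^ (r ^ k)) - 1| ≤ C' * B ^ (r ^ k) := by
  have hr0 : (0:ℝ) < (r:ℝ) := by positivity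
  have hrR : (2:ℝ) ≤ (r:ℝ) := by exact_mod_cast hr
  set x : ℝ := (r:ℝ)⁻¹ with hxdef
  have hx0 : 0 < x := by positivity
  have hxh : x ≤ 1/2 := by
    rw [hxdef]
    rw [inv_le_comm₀ hr0 (by norm_num)]
    linarith
  have hx1 : x < 1 := by linarith
  have hθC : ∀ j, |θ j| ≤ C := by
    intro j
    refine (hθ j).trans ?_
    have : B ^ (r ^ j) ≤ 1 := pow_le_one₀ hB0.le hB1.le
    nlinarith
  -- summability
  have hsum : ∀ k, Summable (fun j : ℕ => ((r:ℝ) ^ (j + 1))⁻¹ * θ (j + k)) := by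
    intro k
    apply Summable.of_norm_bounded (g := fun j : ℕ => C * (x ^ (j+1)))
    · exact ((summable_geometric_of_lt_one hx0.le hx1).mul_left C).comp_injective
        (add_left_injective 1)
    · intro j
      rw [norm_mul, norm_inv, norm_pow, Real.norm_natCast, Real.norm_eq_abs, ← inv_pow]
      calc x ^ (j+1) * |θ (j+k)| ≤ x ^ (j+1) * C := by
            exact mul_le_mul_of_nonneg_left (hθC _) (pow_nonneg hx0.le _)
        _ = C * x ^ (j+1) := by ring
  set S : ℕ → ℝ := fun k => ∑' j : ℕ, ((r:ℝ) ^ (j + 1))⁻¹ * θ (j + k) with hSdef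
  -- shift relation
  have hSrec : ∀ k, S k = x * (θ k + S (k+1)) := by
    intro k
    have h1 : ∀ j : ℕ, ((r:ℝ) ^ (j + 1 + 1))⁻¹ * θ (j + 1 + k)
        = x * (((r:ℝ) ^ (j + 1))⁻¹ * θ (j + (k+1))) := by
      intro j
      have : j + 1 + k = j + (k + 1) := by omega
      rw [this, pow_succ, mul_inv, hxdef, mul_comm (((r:ℝ) ^ (j+1))⁻¹) ((r:ℝ)⁻¹), mul_assoc]
    have h2 : ∑' j : ℕ, ((r:ℝ) ^ (j + 1 + 1))⁻¹ * θ (j + 1 + k) = x * S (k+1) := by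
      rw [tsum_congr h1, tsum_mul_left]
    calc S k = ((r:ℝ) ^ (0+1))⁻¹ * θ (0+k)
          + ∑' j : ℕ, ((r:ℝ) ^ (j + 1 + 1))⁻¹ * θ (j + 1 + k) := Summable.tsum_eq_zero_add (hsum k)
      _ = x * (θ k + S (k+1)) := by
          simp only [zero_add]
          rw [h2, pow_one, hxdef, mul_add]
  -- log recurrence
  have hql : ∀ k, 0 < η k / l := fun k => div_pos (hpos k) hl
  have hL : ∀ k, Real.log (η (k+1) / l) = (r:ℝ) * Real.log (η k / l) + θ k := by
    intro k
    rw [hrec k, Real.log_mul (pow_ne_zero _ (hql k).ne') (Real.exp_ne_zero _), Real.log_pow,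
      Real.log_exp]
  set m0 : ℝ := Real.log (η 0 / l) + S 0 with hm0
  have key : ∀ k, Real.log (η k / l) = (r:ℝ) ^ k * m0 - S k := by
    intro k
    induction k with
    | zero => simp [hm0]
    | succ n ih =>
      rw [hL n, ih, hSrec n]
      have : (r:ℝ) * x = 1 := by
        rw [hxdef]; field_simp
      rw [pow_succ]
      linear_combination (-(θ n + S (n + 1))) * this
  -- bound on S k
  have hSk : ∀ k, |S k| ≤ C * B ^ (r ^ k) := by
    intro k
    have hb : ∀ j : ℕ, |((r:ℝ) ^ (j + 1))⁻¹ * θ (j + k)| ≤ x ^ (j+1) * (C * B ^ (r ^ k)) := by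
      intro j
      rw [abs_mul, abs_inv, abs_pow, Nat.abs_cast, ← inv_pow]
      refine mul_le_mul_of_nonneg_left ?_ (pow_nonneg hx0.le _)
      refine (hθ _).trans ?_
      have hle : r ^ k ≤ r ^ (j + k) := Nat.pow_le_pow_right (by omega) (by omega)
      have : B ^ (r ^ (j + k)) ≤ B ^ (r ^ k) :=
        pow_le_pow_of_le_one hB0.le hB1.le hle
      nlinarith
    have hsum2 : Summable (fun j : ℕ => x ^ (j+1) * (C * B ^ (r ^ k))) := by
      exact (((summable_geometric_of_lt_one hx0.le hx1).comp_injective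
        (add_left_injective 1)).mul_right _)
    have hn : Summable (fun j : ℕ => ‖((r:ℝ) ^ (j + 1))⁻¹ * θ (j + k)‖) := by
      simp only [Real.norm_eq_abs]
      exact (hsum k).abs
    have habs : |S k| ≤ ∑' j : ℕ, x ^ (j+1) * (C * B ^ (r ^ k)) := by
      calc |S k| ≤ ∑' j : ℕ, ‖((r:ℝ) ^ (j + 1))⁻¹ * θ (j + k)‖ := by
            rw [show |S k| = ‖S k‖ from (Real.norm_eq_abs _).symm]
            exact norm_tsum_le_tsum_norm hn
        _ ≤ ∑' j : ℕ, x ^ (j+1) * (C * B ^ (r ^ k)) :=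
            Summable.tsum_le_tsum (fun j => by rw [Real.norm_eq_abs]; exact hb j) hn hsum2
    refine habs.trans ?_
    have hgeo : ∑' j : ℕ, x ^ (j+1) * (C * B ^ (r ^ k))
        = (x * (1 - x)⁻¹) * (C * B ^ (r ^ k)) := by
      rw [tsum_mul_right]
      congr 1
      have : ∀ j : ℕ, x ^ (j+1) = x * x ^ j := fun j => by rw [pow_succ]; ring
      rw [tsum_congr this, tsum_mul_left, tsum_geometric_of_lt_one hx0.le hx1]
    rw [hgeo]
    have hfrac : x * (1 - x)⁻¹ ≤ 1 := by
      rw [← div_eq_mul_inv, div_le_one (by linarith : (0:ℝ) < 1 - x)]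
      linarith
    calc x * (1 - x)⁻¹ * (C * B ^ (r ^ k)) ≤ 1 * (C * B ^ (r ^ k)) :=
          mul_le_mul_of_nonneg_right hfrac (by positivity)
      _ = C * B ^ (r ^ k) := one_mul _
  refine ⟨Real.exp m0, Real.exp_pos _, ?_, ?_⟩
  · intro k; rw [Real.log_exp]; exact key k
  · refine ⟨C * Real.exp C, fun k => ?_⟩
    have hratio : η k / (l * (Real.exp m0) ^ (r ^ k)) = Real.exp (-(S k)) := by
      have h1 : (Real.exp m0) ^ (r ^ k) = Real.exp ((r:ℝ) ^ k * m0) := by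
        rw [← Real.exp_nat_mul]
        congr 1
        push_cast
        ring
      rw [h1]
      have h2 : η k / l = Real.exp (Real.log (η k / l)) := (Real.exp_log (hql k)).symm
      rw [div_mul_eq_div_div, h2, key k, ← Real.exp_sub]
      congr 1
      ring
    rw [hratio]
    calc |Real.exp (-(S k)) - 1| ≤ |(-(S k))| * Real.exp |(-(S k))| :=
          abs_exp_sub_one_le' _
      _ = |S k| * Real.exp |S k| := by rw [abs_neg]
      _ ≤ (C * B ^ (r ^ k)) * Real.exp C := by
          have h1 := hSk k
          have h2 : |S k| ≤ C := by
            refine h1.trans ?_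
            have : B ^ (r ^ k) ≤ 1 := pow_le_one₀ hB0.le hB1.le
            nlinarith
          exact mul_le_mul h1 (Real.exp_le_exp.mpr h2) (Real.exp_pos _).le (by positivity)
      _ = C * Real.exp C * B ^ (r ^ k) := by ring
end

section
/- Let (ρ_h) be a sequence of positive reals and (y_{h,n}), (y_n) positive reals satisfying y_{h,n}/y_n = (ρ_h/ρ)^{−n}·(1+o(1)) uniformly, with ρ_h = ρ·(1 + κ·ζ^{r^h} + o(ζ^{r^h})) as h → ∞ for constants ρ, κ > 0, ζ ∈ (0,1), r > 1. Then for h = log_r(log_d n) + O(1) with d = ζ^{−1}, y_{h,n}/y_n = exp(−κ·n·ζ^{r^h}·(1+o(1)) + o(1)) as n → ∞. In particular, if n·ζ^{r^h} is bounded then y_{h,n}/y_n = exp(−κ n ζ^{r^h})·(1+o(1)). -/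
open Filter

/-- The asymptotic computation at the heart of Theorem C: if
y_{h,n}/y_n = (ρ_h/ρ)^{−n}(1+o(1)) uniformly in h, and
ρ_h = ρ(1 + κζ^{r^h} + o(ζ^{r^h})), then for h_n = log_r(log_d n) + O(1)
(with d = ζ⁻¹) we get y_{h_n,n}/y_n = exp(−κ n ζ^{r^{h_n}}(1+o(1)) + o(1));
if moreover n·ζ^{r^{h_n}} is bounded, then
y_{h_n,n}/y_n = exp(−κ n ζ^{r^{h_n}})·(1+o(1)). -/
theorem stmt_18 (ρ κ ζ r d : ℝ) (hρ : 0 < ρ) (hκ : 0 < κ)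
    (hζ0 : 0 < ζ) (hζ1 : ζ < 1) (hr : 1 < r) (hd : d = ζ⁻¹)
    (ρh : ℕ → ℝ) (hρhpos : ∀ h, 0 < ρh h)
    (Y : ℕ → ℕ → ℝ) (yn : ℕ → ℝ)
    (hYpos : ∀ h n, 0 < Y h n) (hynpos : ∀ n, 0 < yn n)
    (hunif : ∀ δ : ℝ, 0 < δ → ∃ N : ℕ, ∀ n ≥ N, ∀ h : ℕ,
      |Y h n / yn n * (ρh h / ρ) ^ n - 1| ≤ δ)
    (hsing : ∃ e : ℕ → ℝ, Tendsto e atTop (nhds 0) ∧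
      ∀ h : ℕ, ρh h = ρ * (1 + κ * ζ ^ (r ^ (h : ℝ)) * (1 + e h)))
    (hs : ℕ → ℕ) (Cb : ℝ)
    (hhs : ∀ᶠ n : ℕ in atTop, |((hs n : ℝ)) - Real.logb r (Real.logb d n)| ≤ Cb) :
    (∃ u v : ℕ → ℝ, Tendsto u atTop (nhds 0) ∧ Tendsto v atTop (nhds 0) ∧
        ∀ᶠ n : ℕ in atTop,
          Y (hs n) n / yn n
            = Real.exp (-(κ * n * ζ ^ (r ^ (hs n : ℝ)) * (1 + u n)) + v n)) ∧
    ((∃ Cb2 : ℝ, ∀ n : ℕ, (n : ℝ) * ζ ^ (r ^ (hs n : ℝ)) ≤ Cb2) →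
      ∃ u : ℕ → ℝ, Tendsto u atTop (nhds 0) ∧
        ∀ᶠ n : ℕ in atTop,
          Y (hs n) n / yn n
            = Real.exp (-(κ * n * ζ ^ (r ^ (hs n : ℝ)))) * (1 + u n)) := by
  obtain ⟨e, he0, hρhe⟩ := hsing
  have hr0 : (0:ℝ) < r := lt_trans one_pos hr
  have hd1 : 1 < d := by rw [hd]; exact one_lt_inv_iff₀.mpr ⟨hζ0, hζ1⟩
  -- z n is the small quantity ζ^(r^(hs n))
  let z : ℕ → ℝ := fun n => ζ ^ (r ^ ((hs n : ℝ)))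
  have hzpos : ∀ n, 0 < z n := fun n => Real.rpow_pos_of_pos hζ0 _
  -- hs tends to infinity
  have hstopR : Tendsto (fun n : ℕ => ((hs n : ℝ))) atTop atTop := by
    have h1 : Tendsto (fun n : ℕ => Real.logb r (Real.logb d n)) atTop atTop :=
      (Real.tendsto_logb_atTop hr).comp
        ((Real.tendsto_logb_atTop hd1).comp tendsto_natCast_atTop_atTop)
    have h2 : Tendsto (fun n : ℕ => Real.logb r (Real.logb d n) + -Cb) atTop atTop :=
      tendsto_atTop_add_const_right atTop (-Cb) h1
    refine tendsto_atTop_mono' atTop ?_ h2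
    filter_upwards [hhs] with n hn
    have := abs_le.mp hn
    linarith [this.1]
  have hsN : Tendsto hs atTop atTop := tendsto_natCast_atTop_iff.mp hstopR
  have hzr : Tendsto (fun n : ℕ => r ^ ((hs n : ℝ))) atTop atTop := by
    simp only [Real.rpow_def_of_pos hr0]
    exact Real.tendsto_exp_atTop.comp (hstopR.const_mul_atTop (Real.log_pos hr))
  have hz0 : Tendsto z atTop (nhds 0) :=
    (tendsto_rpow_atTop_of_base_lt_one ζ (by linarith) hζ1).comp hzr
  have hes : Tendsto (fun n => e (hs n)) atTop (nhds 0) := he0.comp hsN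
  -- x n
  let x : ℕ → ℝ := fun n => κ * z n * (1 + e (hs n))
  have hx0 : Tendsto x atTop (nhds 0) := by
    have h := (hz0.const_mul κ).mul (hes.const_add 1)
    simp only [mul_zero, zero_mul, add_zero, mul_one] at h
    exact h
  have hxpos : ∀ᶠ n in atTop, 0 < x n := by
    filter_upwards [hes.eventually (eventually_gt_nhds (by norm_num : (-1:ℝ) < 0))] with n hn
    have : 0 < 1 + e (hs n) := by linarith
    positivity
  -- the ratio log(1+x)/x → 1
  let L : ℕ → ℝ := fun n => Real.log (1 + x n) / x n
  have hL : Tendsto L atTop (nhds 1) := by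
    have hlow : Tendsto (fun n => (1 + x n)⁻¹) atTop (nhds 1) := by
      have := (hx0.const_add 1).inv₀ (by norm_num)
      simpa using this
    apply tendsto_of_tendsto_of_tendsto_of_le_of_le' hlow tendsto_const_nhds
    · filter_upwards [hxpos] with n hn
      have h1x : (0:ℝ) < 1 + x n := by linarith
      rw [le_div_iff₀ hn]
      have h := Real.one_sub_inv_le_log_of_pos h1x
      have : (1 + x n)⁻¹ * x n = 1 - (1 + x n)⁻¹ := by
        field_simp
        ring
      rw [this]; linarith
    · filter_upwards [hxpos] with n hn
      rw [div_le_one hn]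
      have := Real.log_le_sub_one_of_pos (by linarith : (0:ℝ) < 1 + x n)
      linarith
  -- u n
  let u : ℕ → ℝ := fun n => Real.log (1 + x n) / (κ * z n) - 1
  have hκzpos : ∀ n, 0 < κ * z n := fun n => by have := hzpos n; positivity
  have hu : Tendsto u atTop (nhds 0) := by
    have haux : Tendsto (fun n => L n * (1 + e (hs n)) - 1) atTop (nhds 0) := by
      have h := (hL.mul (hes.const_add 1)).sub_const 1
      simp only [add_zero, one_mul, mul_one, sub_self] at h
      exact h
    apply haux.congr'
    filter_upwards [hxpos] with n hn
    have he1 : 0 < 1 + e (hs n) := by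
      rcases mul_pos_iff.mp hn with ⟨_, h⟩ | ⟨h, _⟩
      · exact h
      · exact absurd (hκzpos n) (not_lt.mpr h.le)
    have hκz : (κ * z n) ≠ 0 := (hκzpos n).ne'
    show L n * (1 + e (hs n)) - 1 = Real.log (1 + x n) / (κ * z n) - 1
    rw [sub_left_inj]
    show Real.log (1 + x n) / x n * (1 + e (hs n)) = Real.log (1 + x n) / (κ * z n)
    rw [show x n = κ * z n * (1 + e (hs n)) from rfl]
    field_simp
  -- t n and v n
  let t : ℕ → ℝ := fun n => Y (hs n) n / yn n * (ρh (hs n) / ρ) ^ n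
  have ht1 : Tendsto t atTop (nhds 1) := by
    rw [Metric.tendsto_atTop]
    intro ε hε
    obtain ⟨N, hN⟩ := hunif (ε / 2) (by positivity)
    exact ⟨N, fun n hn => by
      rw [Real.dist_eq]
      exact lt_of_le_of_lt (hN n hn (hs n)) (by linarith)⟩
  let v : ℕ → ℝ := fun n => Real.log (t n)
  have hv : Tendsto v atTop (nhds 0) := by
    have hlog : Tendsto Real.log (nhds 1) (nhds 0) := by
      simpa using (Real.continuousAt_log one_ne_zero).tendsto
    exact hlog.comp ht1
  -- the main eventual identity
  have hmain : ∀ᶠ n in atTop,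
      Y (hs n) n / yn n = Real.exp (-(κ * n * z n * (1 + u n)) + v n) := by
    have htpos : ∀ᶠ n in atTop, 0 < t n := by
      filter_upwards [ht1.eventually (eventually_gt_nhds (by norm_num : (0:ℝ) < 1))] with n hn
      exact hn
    filter_upwards [htpos, hxpos] with n htn hxn
    have h1x : (0:ℝ) < 1 + x n := by linarith
    have hratio : ρh (hs n) / ρ = 1 + x n := by
      rw [hρhe (hs n), mul_div_cancel_left₀ _ hρ.ne']
    have hexpu : -(κ * n * z n * (1 + u n)) = -((n : ℝ) * Real.log (1 + x n)) := by
      have hκz : κ * z n ≠ 0 := (hκzpos n).ne'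
      show -(κ * n * z n * (1 + (Real.log (1 + x n) / (κ * z n) - 1))) = _
      field_simp
      rw [show κ + (Real.log (1 + x n) / z n - κ) = Real.log (1 + x n) / z n by ring,
        mul_assoc, mul_div_assoc', mul_div_cancel_left₀ _ (hzpos n).ne']
    have hpow : (1 + x n) ^ n = Real.exp ((n : ℝ) * Real.log (1 + x n)) := by
      rw [Real.exp_nat_mul, Real.exp_log h1x]
    have hYt : Y (hs n) n / yn n = t n * ((1 + x n) ^ n)⁻¹ := by
      have hpne : ((1 + x n) ^ n) ≠ 0 := by positivity
      show Y (hs n) n / yn n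
          = Y (hs n) n / yn n * (ρh (hs n) / ρ) ^ n * ((1 + x n) ^ n)⁻¹
      rw [hratio, mul_assoc, mul_inv_cancel₀ hpne, mul_one]
    rw [hYt, hexpu, Real.exp_add, Real.exp_neg, ← hpow]
    show t n * ((1 + x n) ^ n)⁻¹ = ((1 + x n) ^ n)⁻¹ * Real.exp (Real.log (t n))
    rw [Real.exp_log htn, mul_comm]
  constructor
  · exact ⟨u, v, hu, hv, hmain⟩
  · rintro ⟨Cb2, hCb2⟩
    have hCb2' : 0 ≤ Cb2 := le_trans (by simp) (hCb2 0)
    let u2 : ℕ → ℝ := fun n => Real.exp (-(κ * n * z n * u n) + v n) - 1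
    have ha : Tendsto (fun n => -(κ * n * z n * u n) + v n) atTop (nhds 0) := by
      have h1 : Tendsto (fun n => -(κ * n * z n * u n)) atTop (nhds 0) := by
        apply squeeze_zero_norm (a := fun n => κ * Cb2 * |u n|)
        · intro n
          have hnz : 0 ≤ (n : ℝ) * z n := by positivity
          have hb : (n : ℝ) * z n ≤ Cb2 := hCb2 n
          calc ‖-(κ * n * z n * u n)‖ = (κ * ((n : ℝ) * z n)) * |u n| := by
                rw [norm_neg, Real.norm_eq_abs, abs_mul, abs_of_nonneg (by positivity : (0:ℝ) ≤ κ * n * z n)]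
                ring
            _ ≤ κ * Cb2 * |u n| := by
                have : κ * ((n : ℝ) * z n) ≤ κ * Cb2 := by nlinarith
                exact mul_le_mul_of_nonneg_right this (abs_nonneg _)
        · have := (hu.abs.const_mul (κ * Cb2))
          simpa using this
      simpa using h1.add hv
    have hu2 : Tendsto u2 atTop (nhds 0) := by
      have : Tendsto (fun n => Real.exp (-(κ * n * z n * u n) + v n)) atTop (nhds 1) := by
        have h := (Real.continuous_exp.tendsto 0).comp ha
        simp only [Real.exp_zero] at h
        exact h
      simpa [u2] using this.sub_const 1
    refine ⟨u2, hu2, ?_⟩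
    filter_upwards [hmain] with n hn
    rw [hn]
    show Real.exp (-(κ * n * z n * (1 + u n)) + v n)
        = Real.exp (-(κ * n * z n)) * (1 + (Real.exp (-(κ * n * z n * u n) + v n) - 1))
    have h1 : (1:ℝ) + (Real.exp (-(κ * n * z n * u n) + v n) - 1)
        = Real.exp (-(κ * n * z n * u n) + v n) := by ring
    rw [h1, ← Real.exp_add]
    congr 1
    ring
end

section
/- Let X_n be random variables with values in ℕ such that for every fixed ε ∈ (0,1): P(X_n ≤ h) → 1 whenever h ≥ m_n + ε eventually, and P(X_n ≤ h) → 0 whenever h ≤ m_n − ε eventually, where m_n = log_r(log_d n) for constants r, d > 1. Define h_n = ⌊m_n⌋ if the fractional part {m_n} ≤ 1/2, and h_n = ⌈m_n⌉ otherwise. Then P(X_n ∈ {h_n, h_n + 1}) → 1 as n → ∞. -/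
open Filter MeasureTheory

/-- Two-point concentration: if P(X_n ≤ h_n) → 1 whenever h_n ≥ m_n + ε
eventually and P(X_n ≤ h_n) → 0 whenever h_n ≤ m_n − ε eventually, with
m_n = log_r(log_d n), then with h_n = ⌊m_n⌋ if {m_n} ≤ 1/2 and h_n = ⌈m_n⌉
otherwise, P(X_n ∈ {h_n, h_n + 1}) → 1. -/
theorem stmt_19 (r d : ℝ) (hr : 1 < r) (hd : 1 < d)
    (Ω : ℕ → Type*) [∀ n, MeasurableSpace (Ω n)]
    (μ : ∀ n, Measure (Ω n)) (hprob : ∀ n, IsProbabilityMeasure (μ n))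
    (X : ∀ n, Ω n → ℕ)
    (hupper : ∀ ε : ℝ, 0 < ε → ε < 1 → ∀ h : ℕ → ℕ,
      (∀ᶠ n : ℕ in atTop, Real.logb r (Real.logb d n) + ε ≤ (h n : ℝ)) →
      Tendsto (fun n => ((μ n) {ω | X n ω ≤ h n}).toReal) atTop (nhds 1))
    (hlower : ∀ ε : ℝ, 0 < ε → ε < 1 → ∀ h : ℕ → ℕ,
      (∀ᶠ n : ℕ in atTop, (h n : ℝ) ≤ Real.logb r (Real.logb d n) - ε) →
      Tendsto (fun n => ((μ n) {ω | X n ω ≤ h n}).toReal) atTop (nhds 0)) :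
    Tendsto (fun n =>
        ((μ n) {ω | ((X n ω : ℤ)
            = (if Int.fract (Real.logb r (Real.logb d n)) ≤ 1 / 2
                then ⌊Real.logb r (Real.logb d n)⌋
                else ⌈Real.logb r (Real.logb d n)⌉)) ∨
          ((X n ω : ℤ)
            = (if Int.fract (Real.logb r (Real.logb d n)) ≤ 1 / 2
                then ⌊Real.logb r (Real.logb d n)⌋
                else ⌈Real.logb r (Real.logb d n)⌉) + 1)}).toReal)
      atTop (nhds 1) := by
  set m : ℕ → ℝ := fun n => Real.logb r (Real.logb d n) with hm_def
  set hI : ℕ → ℤ := fun n => if Int.fract (m n) ≤ 1 / 2 then ⌊m n⌋ else ⌈m n⌉ with hI_def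
  have hm : Tendsto m atTop atTop :=
    (Real.tendsto_logb_atTop hr).comp
      ((Real.tendsto_logb_atTop hd).comp tendsto_natCast_atTop_atTop)
  have hEv : ∀ᶠ n in atTop, 2 ≤ m n := hm.eventually_ge_atTop 2
  -- eventual facts about hI
  have hIfacts : ∀ n, 2 ≤ m n →
      (1 ≤ hI n ∧ m n + 1/4 ≤ (hI n : ℝ) + 1 ∧ (hI n : ℝ) - 1 ≤ m n - 1/4) := by
    intro n hn
    have hfl : (⌊m n⌋ : ℝ) = m n - Int.fract (m n) := by
      rw [Int.fract]; ring
    have hf0 : 0 ≤ Int.fract (m n) := Int.fract_nonneg _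
    have hf1 : Int.fract (m n) < 1 := Int.fract_lt_one _
    have hfl2 : (2:ℤ) ≤ ⌊m n⌋ := by
      have : (2:ℝ) = ((2:ℤ):ℝ) := by norm_num
      exact Int.le_floor.mpr (by rw [← this]; exact hn)
    by_cases hc : Int.fract (m n) ≤ 1 / 2
    · simp only [hI_def, if_pos hc]
      refine ⟨by linarith, ?_, ?_⟩ <;> push_cast <;> linarith
    · simp only [hI_def, if_neg hc]
      have h1 : m n ≤ (⌈m n⌉ : ℝ) := Int.le_ceil _
      have h2 : (⌈m n⌉ : ℝ) ≤ (⌊m n⌋ : ℝ) + 1 := by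
        exact_mod_cast Int.ceil_le_floor_add_one (m n)
      have h3 : (2:ℤ) ≤ ⌈m n⌉ := le_trans hfl2 (Int.floor_le_ceil _)
      refine ⟨by linarith, by linarith, by linarith⟩
  -- the upper and lower test sequences
  set H : ℕ → ℕ := fun n => (hI n + 1).toNat with hH_def
  set L : ℕ → ℕ := fun n => (hI n - 1).toNat with hL_def
  have hHcast : ∀ n, 2 ≤ m n → ((H n : ℤ) = hI n + 1 ∧ (L n : ℤ) = hI n - 1) := by
    intro n hn
    have h1 := (hIfacts n hn).1
    constructor <;> simp only [hH_def, hL_def] <;> rw [Int.toNat_of_nonneg] <;> omega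
  have hup : Tendsto (fun n => ((μ n) {ω | X n ω ≤ H n}).toReal) atTop (nhds 1) := by
    refine hupper (1/4) (by norm_num) (by norm_num) H ?_
    filter_upwards [hEv] with n hn
    obtain ⟨-, h2, -⟩ := hIfacts n hn
    have := (hHcast n hn).1
    have : ((H n : ℤ) : ℝ) = (hI n : ℝ) + 1 := by exact_mod_cast this
    push_cast at this
    linarith [this.ge]
  have hlo : Tendsto (fun n => ((μ n) {ω | X n ω ≤ L n}).toReal) atTop (nhds 0) := by
    refine hlower (1/4) (by norm_num) (by norm_num) L ?_
    filter_upwards [hEv] with n hn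
    obtain ⟨-, -, h3⟩ := hIfacts n hn
    have := (hHcast n hn).2
    have : ((L n : ℤ) : ℝ) = (hI n : ℝ) - 1 := by exact_mod_cast this
    push_cast at this
    linarith [this.le]
  -- sandwich
  have hsub : Tendsto (fun n => ((μ n) {ω | X n ω ≤ H n}).toReal
      - ((μ n) {ω | X n ω ≤ L n}).toReal) atTop (nhds 1) := by
    have := hup.sub hlo
    simpa using this
  refine tendsto_of_tendsto_of_tendsto_of_le_of_le' hsub tendsto_const_nhds ?_ ?_
  · filter_upwards [hEv] with n hn
    have hsubset : {ω | X n ω ≤ H n} ⊆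
        {ω | ((X n ω : ℤ) = hI n) ∨ ((X n ω : ℤ) = hI n + 1)} ∪ {ω | X n ω ≤ L n} := by
      intro ω hω
      by_cases hL : X n ω ≤ L n
      · exact Or.inr hL
      · left
        simp only [Set.mem_setOf_eq] at hω ⊢
        obtain ⟨hHc, hLc⟩ := hHcast n hn
        have h1 : (X n ω : ℤ) ≤ (H n : ℤ) := by exact_mod_cast hω
        have h2 : (L n : ℤ) < (X n ω : ℤ) := by exact_mod_cast Nat.lt_of_not_le hL
        omega
    have hμ : (μ n) {ω | X n ω ≤ H n} ≤
        (μ n) {ω | ((X n ω : ℤ) = hI n) ∨ ((X n ω : ℤ) = hI n + 1)}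
          + (μ n) {ω | X n ω ≤ L n} :=
      le_trans (measure_mono hsubset) (measure_union_le _ _)
    have h1 : (μ n) {ω | ((X n ω : ℤ) = hI n) ∨ ((X n ω : ℤ) = hI n + 1)} ≠ ⊤ :=
      measure_ne_top _ _
    have h2 : (μ n) {ω | X n ω ≤ L n} ≠ ⊤ := measure_ne_top _ _
    have h3 : (μ n) {ω | X n ω ≤ H n} ≠ ⊤ := measure_ne_top _ _
    have := ENNReal.toReal_mono (by finiteness) hμ
    rw [ENNReal.toReal_add h1 h2] at this
    linarith
  · filter_upwards with n
    calc ((μ n) _).toReal ≤ ((μ n) Set.univ).toReal :=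
          ENNReal.toReal_mono (measure_ne_top _ _) (measure_mono (Set.subset_univ _))
      _ = 1 := by rw [measure_univ, ENNReal.toReal_one]
end
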